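/- Let Ω₀ be a bounded self-adjoint operator and B₀ a Hilbert–Schmidt operator on a complex Hilbert space h, both real symmetric (Ω₀ = Ω₀ᵗ, B₀ = B₀ᵗ = B̄₀), satisfying Ω₀ + 2B₀ ≥ μ·1 and Ω₀ − 2B₀ ≥ μ·1 for some μ > 0. Then Ω₀ ≥ μ·1 > 0 (in particular Ω₀ is positive and invertible), and Ω₀ ≥ 4 B₀ Ω₀⁻¹ B₀ + μ·1. -/

import Mathlib

open scoped InnerProductSpace ComplexConjugate

/-- Friedrichs–Berezin assumptions imply Conditions A1, A2 and A6:
if `Ω` is a bounded self-adjoint operator and `B` a Hilbert–Schmidt operator, both real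
symmetric with respect to a conjugation `J`, and `Ω ± 2B ≥ μ·1` with `μ > 0`, then
`Ω ≥ μ·1 > 0` (in particular `Ω` is invertible) and `Ω ≥ 4 B Ω⁻¹ B + μ·1`. -/
theorem stmt_0 {H ι : Type*} [NormedAddCommGroup H] [InnerProductSpace ℂ H] [CompleteSpace H]
    (J : H → H)
    (hJadd : ∀ x y, J (x + y) = J x + J y)
    (hJsmul : ∀ (z : ℂ) (x : H), J (z • x) = conj z • J x)
    (hJJ : ∀ x, J (J x) = x)
    (hJinner : ∀ x y, ⟪J x, J y⟫_ℂ = ⟪y, x⟫_ℂ)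
    (e : HilbertBasis ι ℂ H)
    (Ω B : H →L[ℂ] H) (μ : ℝ) (hμ : 0 < μ)
    (hΩsa : IsSelfAdjoint Ω)
    (hΩt : ∀ f g, ⟪f, Ω g⟫_ℂ = ⟪J g, Ω (J f)⟫_ℂ)
    (hBt : ∀ f g, ⟪f, B g⟫_ℂ = ⟪J g, B (J f)⟫_ℂ)
    (hBbar : ∀ f g, ⟪f, B g⟫_ℂ = conj ⟪J f, B (J g)⟫_ℂ)
    (hHS : Summable fun k => ‖B (e k)‖ ^ 2)
    (hplus : ∀ ψ : H, μ * ‖ψ‖ ^ 2 ≤ (⟪ψ, Ω ψ⟫_ℂ + 2 * ⟪ψ, B ψ⟫_ℂ).re)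
    (hminus : ∀ ψ : H, μ * ‖ψ‖ ^ 2 ≤ (⟪ψ, Ω ψ⟫_ℂ - 2 * ⟪ψ, B ψ⟫_ℂ).re) :
    (∀ ψ : H, μ * ‖ψ‖ ^ 2 ≤ (⟪ψ, Ω ψ⟫_ℂ).re) ∧
      ∃ Ωinv : H →L[ℂ] H, Ω * Ωinv = 1 ∧ Ωinv * Ω = 1 ∧
        ∀ ψ : H, 4 * (⟪B ψ, Ωinv (B ψ)⟫_ℂ).re + μ * ‖ψ‖ ^ 2 ≤ (⟪ψ, Ω ψ⟫_ℂ).re := by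
  -- B is self-adjoint
  have hBsa : ∀ f g : H, ⟪f, B g⟫_ℂ = ⟪B f, g⟫_ℂ := by
    intro f g
    have h2 := hBt (J f) (J g)
    rw [hJJ, hJJ] at h2
    rw [hBbar f g, h2, inner_conj_symm]
  -- coercivity
  have hcoer : ∀ ψ : H, μ * ‖ψ‖ ^ 2 ≤ (⟪ψ, Ω ψ⟫_ℂ).re := by
    intro ψ
    have h1 := hplus ψ
    have h2 := hminus ψ
    simp only [Complex.add_re, Complex.sub_re] at h1 h2
    linarith
  -- key two-variable inequality
  have hkey : ∀ ψ φ : H, μ * (‖ψ‖ ^ 2 + ‖φ‖ ^ 2) ≤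
      (⟪ψ, Ω ψ⟫_ℂ).re + (⟪φ, Ω φ⟫_ℂ).re + 4 * (⟪ψ, B φ⟫_ℂ).re := by
    intro ψ φ
    have hp := hplus (ψ + φ)
    have hm := hminus (ψ - φ)
    have hnorm : ‖ψ + φ‖ ^ 2 + ‖ψ - φ‖ ^ 2 = 2 * (‖ψ‖ ^ 2 + ‖φ‖ ^ 2) := by
      have := parallelogram_law_with_norm ℂ ψ φ
      nlinarith [this]
    have hre : (⟪φ, B ψ⟫_ℂ).re = (⟪ψ, B φ⟫_ℂ).re := by
      have h : (⟪φ, B ψ⟫_ℂ) = conj ⟪ψ, B φ⟫_ℂ := by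
        rw [inner_conj_symm, ← hBsa]
      rw [h, Complex.conj_re]
    have hexp : (⟪ψ + φ, Ω (ψ + φ)⟫_ℂ + 2 * ⟪ψ + φ, B (ψ + φ)⟫_ℂ)
        + (⟪ψ - φ, Ω (ψ - φ)⟫_ℂ - 2 * ⟪ψ - φ, B (ψ - φ)⟫_ℂ)
        = 2 * ⟪ψ, Ω ψ⟫_ℂ + 2 * ⟪φ, Ω φ⟫_ℂ + 4 * (⟪ψ, B φ⟫_ℂ + ⟪φ, B ψ⟫_ℂ) := by
      simp only [map_add, map_sub, inner_add_left, inner_add_right, inner_sub_left,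
        inner_sub_right]
      ring
    have hre2 := congrArg Complex.re hexp
    simp only [Complex.add_re, Complex.sub_re, Complex.mul_re, Complex.re_ofNat,
      Complex.im_ofNat, Complex.add_im] at hre2 hp hm
    have hn2 : μ * ‖ψ + φ‖ ^ 2 + μ * ‖ψ - φ‖ ^ 2 = 2 * (μ * (‖ψ‖ ^ 2 + ‖φ‖ ^ 2)) := by
      nlinarith [hnorm]
    linarith [hp, hm, hre2, hre, hn2]
  refine ⟨hcoer, ?_⟩
  -- lower bound on ‖Ω ψ‖
  have hlow : ∀ ψ : H, μ * ‖ψ‖ ≤ ‖Ω ψ‖ := by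
    intro ψ
    rcases eq_or_ne ψ 0 with rfl | hne
    · simp
    · have h1 := hcoer ψ
      have h2 : (⟪ψ, Ω ψ⟫_ℂ).re ≤ ‖ψ‖ * ‖Ω ψ‖ := by
        calc (⟪ψ, Ω ψ⟫_ℂ).re ≤ ‖⟪ψ, Ω ψ⟫_ℂ‖ := Complex.re_le_norm _
        _ ≤ ‖ψ‖ * ‖Ω ψ‖ := norm_inner_le_norm _ _
      have hpos : 0 < ‖ψ‖ := norm_pos_iff.mpr hne
      nlinarith
  have halip : AntilipschitzWith (⟨μ, hμ.le⟩ : NNReal)⁻¹ Ω := by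
    apply ContinuousLinearMap.antilipschitz_of_bound
    intro x
    change ‖x‖ ≤ μ⁻¹ * ‖Ω x‖
    rw [inv_mul_eq_div, le_div_iff₀ hμ]
    nlinarith [hlow x]
  have hker : LinearMap.ker (Ω : H →ₗ[ℂ] H) = ⊥ := LinearMap.ker_eq_bot.mpr halip.injective
  have hclosed : IsClosed (LinearMap.range (Ω : H →ₗ[ℂ] H) : Set H) := by
    have h : (LinearMap.range (Ω : H →ₗ[ℂ] H) : Set H) = Set.range Ω := by
      ext x; simp [LinearMap.mem_range]
    rw [h]
    exact halip.isClosed_range Ω.uniformContinuous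
  haveI : CompleteSpace (LinearMap.range (Ω : H →ₗ[ℂ] H)) := hclosed.completeSpace_coe
  have hrange : LinearMap.range (Ω : H →ₗ[ℂ] H) = ⊤ := by
    rw [← Submodule.orthogonal_eq_bot_iff]
    rw [Submodule.eq_bot_iff]
    intro x hx
    have hx0 : ⟪Ω x, x⟫_ℂ = 0 := hx (Ω x) ⟨x, rfl⟩
    have hr0 : (⟪x, Ω x⟫_ℂ).re = 0 := by
      rw [← inner_conj_symm, hx0]; simp
    have h1 := hcoer x
    have h3 : ‖x‖ ^ 2 ≤ 0 := by nlinarith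
    have h4 : ‖x‖ ^ 2 = 0 := le_antisymm h3 (sq_nonneg _)
    exact norm_eq_zero.mp (pow_eq_zero_iff two_ne_zero |>.mp h4)
  set E := ContinuousLinearEquiv.ofBijective Ω hker hrange with hE
  have hEcoe : ∀ x, E x = Ω x := fun x => rfl
  refine ⟨E.symm, ?_, ?_, ?_⟩
  · ext x
    simp only [ContinuousLinearMap.mul_apply, ContinuousLinearMap.one_apply,
      ContinuousLinearEquiv.coe_coe]
    rw [← hEcoe]
    exact E.apply_symm_apply x
  · ext x
    simp only [ContinuousLinearMap.mul_apply, ContinuousLinearMap.one_apply,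
      ContinuousLinearEquiv.coe_coe]
    rw [← hEcoe]
    exact E.symm_apply_apply x
  · intro ψ
    set c := B ψ with hc
    set v : H := E.symm c with hv
    have hΩv : Ω v = c := by rw [← hEcoe]; exact E.apply_symm_apply c
    set φ : H := (-2 : ℂ) • v with hφ
    have hconj2 : (starRingEnd ℂ) (-2 : ℂ) = -2 := by rw [map_neg, map_ofNat]
    have hvc : (⟪v, c⟫_ℂ).re = (⟪c, v⟫_ℂ).re := by
      have h : (⟪v, c⟫_ℂ) = conj ⟪c, v⟫_ℂ := by rw [inner_conj_symm]
      rw [h, Complex.conj_re]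
    have h1 : (⟪φ, Ω φ⟫_ℂ).re = 4 * (⟪c, v⟫_ℂ).re := by
      have e1 : ⟪φ, Ω φ⟫_ℂ = 4 * ⟪v, c⟫_ℂ := by
        rw [hφ, map_smul, hΩv, inner_smul_left, inner_smul_right, hconj2]
        ring
      rw [e1]
      have e2 : ((4 : ℂ) * ⟪v, c⟫_ℂ).re = 4 * (⟪v, c⟫_ℂ).re := by
        simp [Complex.mul_re]
      rw [e2, hvc]
    have h2 : (⟪ψ, B φ⟫_ℂ).re = -2 * (⟪c, v⟫_ℂ).re := by
      rw [hBsa, ← hc, hφ, inner_smul_right]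
      simp [Complex.mul_re]
    have hk := hkey ψ φ
    rw [h1, h2] at hk
    have hφn : 0 ≤ μ * ‖φ‖ ^ 2 := by positivity
    have hgoal : 4 * (⟪c, v⟫_ℂ).re + μ * ‖ψ‖ ^ 2 ≤ (⟪ψ, Ω ψ⟫_ℂ).re := by linarith
    exact hgoal
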